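/- Let d, L, K ∈ ℕ, Δt > 0, z⁰ ∈ ℝ^d, and let S ⊆ {1, …, K} be a set of jump indices. Let a : ℝ^d × ℝ^L → ℝ^d, g : ℝ^d × ℝ^L → ℝ, c : ℝ^d → ℝ^d and, for each κ ∈ {0, …, K−1}, β^κ : ℝ^d → ℝ^d all be continuously differentiable. For μ = (μ⁰, …, μ^{K−1}) ∈ (ℝ^L)^K define the states by z⁰(μ) = z⁰ and, for κ = 0, …, K−1: if κ+1 ∈ S then z^{κ+1}(μ) = c(z^κ(μ)) (a jump step), otherwise z^{κ+1}(μ) = z^κ(μ) + Δt·a(z^κ(μ), μ^κ) + β^κ(z^κ(μ)) (an Euler step). Define J(μ) = Δt·Σ_{κ : κ+1 ∉ S} g(z^κ(μ), μ^κ), the sum over Euler steps. Define adjoint states backward by r^K = 0 and, for κ = K−1, …, 0: if κ+1 ∈ S then r^κ = (D c(z^κ))^⊤ r^{κ+1}, otherwise r^κ = r^{κ+1} + Δt·(D_z a(z^κ, μ^κ))^⊤ r^{κ+1} + (D β^κ(z^κ))^⊤ r^{κ+1} − Δt·∇_z g(z^κ, μ^κ). Then J is differentiable and for every κ ∈ {0,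 …, K−1}: if κ+1 ∉ S then ∇_{μ^κ} J(μ) = Δt·∇_μ g(z^κ, μ^κ) − Δt·(D_μ a(z^κ, μ^κ))^⊤ r^{κ+1}, and if κ+1 ∈ S then ∇_{μ^κ} J(μ) = 0. -/

import Mathlib

open scoped BigOperators
open scoped RealInnerProductSpace

set_option maxHeartbeats 1000000

/-- Sensitivity operators for the perturbed-control state recursion. -/
noncomputable def adjDarr {E F : Type*} [NormedAddCommGroup E] [NormedSpace ℝ E]
    [NormedAddCommGroup F] [NormedSpace ℝ F]
    (Δt : ℝ) (S : Finset ℕ) (a : E × F → E) (c : E → E) (β : ℕ → E → E)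
    (w : ℕ → E) (u : ℕ → F) (κ₀ : ℕ) : ℕ → (F →L[ℝ] E)
  | 0 => 0
  | j + 1 =>
    if j + 1 ∈ S then (fderiv ℝ c (w j)).comp (adjDarr Δt S a c β w u κ₀ j)
    else if j = κ₀ then Δt • fderiv ℝ (fun m => a (w κ₀, m)) (u κ₀)
    else adjDarr Δt S a c β w u κ₀ j
      + Δt • ((fderiv ℝ (fun v => a (v, u j)) (w j)).comp (adjDarr Δt S a c β w u κ₀ j))
      + (fderiv ℝ (β j) (w j)).comp (adjDarr Δt S a c β w u κ₀ j)

lemma adjDarr_zero {E F : Type*} [NormedAddCommGroup E] [NormedSpace ℝ E]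
    [NormedAddCommGroup F] [NormedSpace ℝ F]
    (Δt : ℝ) (S : Finset ℕ) (a : E × F → E) (c : E → E) (β : ℕ → E → E)
    (w : ℕ → E) (u : ℕ → F) (κ₀ : ℕ) :
    adjDarr Δt S a c β w u κ₀ 0 = 0 := rfl

lemma adjDarr_succ {E F : Type*} [NormedAddCommGroup E] [NormedSpace ℝ E]
    [NormedAddCommGroup F] [NormedSpace ℝ F]
    (Δt : ℝ) (S : Finset ℕ) (a : E × F → E) (c : E → E) (β : ℕ → E → E)
    (w : ℕ → E) (u : ℕ → F) (κ₀ : ℕ) (j : ℕ) :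
    adjDarr Δt S a c β w u κ₀ (j + 1) =
    if j + 1 ∈ S then (fderiv ℝ c (w j)).comp (adjDarr Δt S a c β w u κ₀ j)
    else if j = κ₀ then Δt • fderiv ℝ (fun m => a (w κ₀, m)) (u κ₀)
    else adjDarr Δt S a c β w u κ₀ j
      + Δt • ((fderiv ℝ (fun v => a (v, u j)) (w j)).comp (adjDarr Δt S a c β w u κ₀ j))
      + (fderiv ℝ (β j) (w j)).comp (adjDarr Δt S a c β w u κ₀ j) := rfl

lemma inner_gradient_eq {E : Type*} [NormedAddCommGroup E] [InnerProductSpace ℝ E]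
    [CompleteSpace E] (f : E → ℝ) (x v : E) :
    ⟪gradient f x, v⟫ = fderiv ℝ f x v := by
  rw [gradient, InnerProductSpace.toDual_symm_apply]

/-- discretize-then-optimize adjoint gradient formula for the
explicit Euler scheme with jump steps. With jump index set `S ⊆ {1,…,K}`, the
states follow `z^{κ+1} = c(z^κ)` if `κ+1 ∈ S` and the Euler step otherwise; the
cost is `J(μ) = Δt·Σ_{κ : κ+1 ∉ S} g(z^κ, μ^κ)`; the adjoint states satisfy
`r^K = 0`, `r^κ = (Dc(z^κ))^⊤ r^{κ+1}` at jump steps and the Euler adjoint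
recursion otherwise. Then `J` is differentiable, and `∇_{μ^κ} J(μ)` equals
`Δt·∇_μ g(z^κ, μ^κ) − Δt·(D_μ a(z^κ, μ^κ))^⊤ r^{κ+1}` if `κ+1 ∉ S`, and `0` if
`κ+1 ∈ S`. -/
theorem euler_jump_adjoint_gradient {d L K : ℕ} (Δt : ℝ) (hΔt : 0 < Δt)
    (z0 : EuclideanSpace ℝ (Fin d)) (S : Finset ℕ) (hS : S ⊆ Finset.Icc 1 K)
    (a : EuclideanSpace ℝ (Fin d) × EuclideanSpace ℝ (Fin L) → EuclideanSpace ℝ (Fin d))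
    (g : EuclideanSpace ℝ (Fin d) × EuclideanSpace ℝ (Fin L) → ℝ)
    (c : EuclideanSpace ℝ (Fin d) → EuclideanSpace ℝ (Fin d))
    (β : ℕ → EuclideanSpace ℝ (Fin d) → EuclideanSpace ℝ (Fin d))
    (ha : ContDiff ℝ 1 a) (hg : ContDiff ℝ 1 g) (hc : ContDiff ℝ 1 c)
    (hβ : ∀ κ, ContDiff ℝ 1 (β κ))
    -- the states, as functions of the control sequence
    (z : (Fin K → EuclideanSpace ℝ (Fin L)) → ℕ → EuclideanSpace ℝ (Fin d))
    (hz0 : ∀ μ, z μ 0 = z0)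
    (hzjump : ∀ μ, ∀ κ : Fin K, (κ : ℕ) + 1 ∈ S →
      z μ ((κ : ℕ) + 1) = c (z μ κ))
    (hzeuler : ∀ μ, ∀ κ : Fin K, (κ : ℕ) + 1 ∉ S →
      z μ ((κ : ℕ) + 1) = z μ κ + Δt • a (z μ κ, μ κ) + β κ (z μ κ))
    -- the discrete cost (sum over the Euler steps)
    (J : (Fin K → EuclideanSpace ℝ (Fin L)) → ℝ)
    (hJ : J = fun μ => Δt *
      ∑ κ ∈ Finset.univ.filter (fun κ : Fin K => (κ : ℕ) + 1 ∉ S), g (z μ κ, μ κ))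
    -- a fixed control and its adjoint states
    (μ : Fin K → EuclideanSpace ℝ (Fin L))
    (r : ℕ → EuclideanSpace ℝ (Fin d))
    (hrK : r K = 0)
    (hrjump : ∀ κ : Fin K, (κ : ℕ) + 1 ∈ S →
      r κ = (fderiv ℝ c (z μ κ)).adjoint (r ((κ : ℕ) + 1)))
    (hreuler : ∀ κ : Fin K, (κ : ℕ) + 1 ∉ S →
      r κ = r ((κ : ℕ) + 1)
        + Δt • (fderiv ℝ (fun w => a (w, μ κ)) (z μ κ)).adjoint (r ((κ : ℕ) + 1))
        + (fderiv ℝ (β κ) (z μ κ)).adjoint (r ((κ : ℕ) + 1))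
        - Δt • gradient (fun w => g (w, μ κ)) (z μ κ)) :
    Differentiable ℝ J ∧
    ∀ κ : Fin K,
      ((κ : ℕ) + 1 ∉ S →
        gradient (fun m => J (Function.update μ κ m)) (μ κ)
          = Δt • gradient (fun m => g (z μ κ, m)) (μ κ)
            - Δt • (fderiv ℝ (fun m => a (z μ κ, m)) (μ κ)).adjoint (r ((κ : ℕ) + 1))) ∧
      ((κ : ℕ) + 1 ∈ S →
        gradient (fun m => J (Function.update μ κ m)) (μ κ) = 0) := by
  have hadiff := ha.differentiable one_ne_zero
  have hgdiff := hg.differentiable one_ne_zero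
  have hcdiff := hc.differentiable one_ne_zero
  have hβdiff : ∀ k, Differentiable ℝ (β k) := fun k => (hβ k).differentiable one_ne_zero
  -- Differentiability of the states in the control sequence
  have hzdiff : ∀ j, j ≤ K → Differentiable ℝ (fun ν => z ν j) := by
    intro j
    induction j with
    | zero =>
      intro _
      have he : (fun ν : Fin K → EuclideanSpace ℝ (Fin L) => z ν 0) = fun _ => z0 :=
        funext hz0
      rw [he]; exact differentiable_const _
    | succ j ih =>
      intro hj
      have hjK : j < K := hj
      have ihd := ih hjK.le
      have hproj : Differentiable ℝ
          (fun ν : Fin K → EuclideanSpace ℝ (Fin L) => ν ⟨j, hjK⟩) :=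
        (ContinuousLinearMap.proj (R := ℝ)
          (φ := fun _ : Fin K => EuclideanSpace ℝ (Fin L)) ⟨j, hjK⟩).differentiable
      by_cases hs : j + 1 ∈ S
      · have he : (fun ν => z ν (j + 1)) = fun ν => c (z ν j) :=
          funext fun ν => hzjump ν ⟨j, hjK⟩ hs
        rw [he]; exact hcdiff.comp ihd
      · have he : (fun ν => z ν (j + 1)) =
            fun ν => z ν j + Δt • a (z ν j, ν ⟨j, hjK⟩) + β j (z ν j) :=
          funext fun ν => hzeuler ν ⟨j, hjK⟩ hs
        rw [he]
        exact (ihd.add ((hadiff.comp (ihd.prodMk hproj)).const_smul Δt)).add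
          ((hβdiff j).comp ihd)
  have hJdiff : Differentiable ℝ J := by
    rw [hJ]
    refine Differentiable.const_mul (Differentiable.fun_sum fun κ _ => ?_) Δt
    exact hgdiff.comp ((hzdiff κ κ.isLt.le).prodMk
      (ContinuousLinearMap.proj (R := ℝ)
        (φ := fun _ : Fin K => EuclideanSpace ℝ (Fin L)) κ).differentiable)
  refine ⟨hJdiff, ?_⟩
  -- the main gradient computation, uniform in both cases
  have main : ∀ κ₀ : Fin K, HasGradientAt (fun m => J (Function.update μ κ₀ m))
      (if (κ₀ : ℕ) + 1 ∈ S then 0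
       else Δt • gradient (fun m => g (z μ κ₀, m)) (μ κ₀)
          - Δt • (fderiv ℝ (fun m => a (z μ κ₀, m)) (μ κ₀)).adjoint (r ((κ₀ : ℕ) + 1)))
      (μ κ₀) := by
    intro κ₀
    set u : ℕ → EuclideanSpace ℝ (Fin L) :=
      fun j => if h : j < K then μ ⟨j, h⟩ else 0 with hudef
    have hu : ∀ κ : Fin K, u (κ : ℕ) = μ κ := by
      intro κ; rw [hudef]; simp [κ.isLt]
    set D : ℕ → (EuclideanSpace ℝ (Fin L) →L[ℝ] EuclideanSpace ℝ (Fin d)) :=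
      adjDarr Δt S a c β (z μ) u (κ₀ : ℕ) with hDdef
    have hDzero : D 0 = 0 := by rw [hDdef]; rfl
    have hDsucc : ∀ j, D (j + 1) =
        if j + 1 ∈ S then (fderiv ℝ c (z μ j)).comp (D j)
        else if j = (κ₀ : ℕ) then
          Δt • fderiv ℝ (fun m => a (z μ (κ₀ : ℕ), m)) (u (κ₀ : ℕ))
        else D j + Δt • ((fderiv ℝ (fun w => a (w, u j)) (z μ j)).comp (D j))
          + (fderiv ℝ (β j) (z μ j)).comp (D j) := by
      intro j; rw [hDdef]; exact adjDarr_succ ..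
    have hfix : Function.update μ κ₀ (μ κ₀) = μ := Function.update_eq_self κ₀ μ
    -- states below κ₀ are unaffected by the perturbation
    have hA : ∀ (m : EuclideanSpace ℝ (Fin L)) (j : ℕ), j ≤ (κ₀ : ℕ) →
        z (Function.update μ κ₀ m) j = z μ j := by
      intro m j
      induction j with
      | zero => intro _; rw [hz0, hz0]
      | succ j ih =>
        intro hj
        have hjn : j < (κ₀ : ℕ) := hj
        have hjK : j < K := hjn.trans κ₀.isLt
        have hupd : Function.update μ κ₀ m ⟨j, hjK⟩ = μ ⟨j, hjK⟩ :=
          Function.update_of_ne (Fin.ne_of_val_ne hjn.ne) _ _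
        by_cases hs : j + 1 ∈ S
        · rw [hzjump _ ⟨j, hjK⟩ hs, hzjump μ ⟨j, hjK⟩ hs, ih hjn.le]
        · rw [hzeuler _ ⟨j, hjK⟩ hs, hzeuler μ ⟨j, hjK⟩ hs, ih hjn.le, hupd]
    -- sensitivities vanish up to κ₀
    have hD0 : ∀ j, j ≤ (κ₀ : ℕ) → D j = 0 := by
      intro j
      induction j with
      | zero => intro _; exact hDzero
      | succ j ih =>
        intro hj
        have hjn : j < (κ₀ : ℕ) := hj
        rw [hDsucc, ih hjn.le]
        split_ifs with h1 h2
        · simp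
        · exact absurd h2 hjn.ne
        · simp
          exact ContinuousLinearMap.ext fun _ => by simp
    -- the sensitivities are the derivatives of the perturbed states
    have hDf : ∀ j, j ≤ K →
        HasFDerivAt (fun m => z (Function.update μ κ₀ m) j) (D j) (μ κ₀) := by
      intro j
      induction j with
      | zero =>
        intro _
        have he : (fun m : EuclideanSpace ℝ (Fin L) => z (Function.update μ κ₀ m) 0)
            = fun _ => z0 := funext fun m => hz0 _
        rw [he, hDzero]
        exact hasFDerivAt_const _ _
      | succ j ih =>
        intro hj
        have hjK : j < K := hj
        have ihf := ih hjK.le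
        by_cases hs : j + 1 ∈ S
        · have he : (fun m => z (Function.update μ κ₀ m) (j + 1))
              = fun m => c (z (Function.update μ κ₀ m) j) :=
            funext fun m => hzjump _ ⟨j, hjK⟩ hs
          rw [he, hDsucc, if_pos hs]
          have hc' : HasFDerivAt c (fderiv ℝ c (z μ j))
              (z (Function.update μ κ₀ (μ κ₀)) j) := by
            rw [hfix]; exact (hcdiff (z μ j)).hasFDerivAt
          exact hc'.comp (μ κ₀) ihf
        · by_cases hk : j = (κ₀ : ℕ)
          · subst hk
            have he : (fun m => z (Function.update μ κ₀ m) ((κ₀ : ℕ) + 1))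
                = fun m => z μ (κ₀ : ℕ) + Δt • a (z μ (κ₀ : ℕ), m)
                  + β (κ₀ : ℕ) (z μ (κ₀ : ℕ)) := by
              funext m
              have h1 := hzeuler (Function.update μ κ₀ m) ⟨(κ₀ : ℕ), hjK⟩ hs
              rw [h1, hA m (κ₀ : ℕ) le_rfl]
              have h2 : Function.update μ κ₀ m ⟨(κ₀ : ℕ), hjK⟩ = m := by
                have h3 : (⟨(κ₀ : ℕ), hjK⟩ : Fin K) = κ₀ := Fin.ext rfl
                rw [h3, Function.update_self]
              rw [h2]
            rw [he, hDsucc, if_neg hs, if_pos rfl, hu κ₀]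
            have h1 : HasFDerivAt (fun m => a (z μ (κ₀ : ℕ), m))
                (fderiv ℝ (fun m => a (z μ (κ₀ : ℕ), m)) (μ κ₀)) (μ κ₀) :=
              ((hadiff.comp ((differentiable_const _).prodMk
                differentiable_id)).differentiableAt).hasFDerivAt
            exact ((h1.const_smul Δt).const_add (z μ (κ₀ : ℕ))).add_const
              (β (κ₀ : ℕ) (z μ (κ₀ : ℕ)))
          · have hκ : (⟨j, hjK⟩ : Fin K) ≠ κ₀ := Fin.ne_of_val_ne hk
            have he : (fun m => z (Function.update μ κ₀ m) (j + 1))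
                = fun m => z (Function.update μ κ₀ m) j
                  + Δt • a (z (Function.update μ κ₀ m) j, μ ⟨j, hjK⟩)
                  + β j (z (Function.update μ κ₀ m) j) := by
              funext m
              rw [hzeuler _ ⟨j, hjK⟩ hs, Function.update_of_ne hκ]
            rw [he, hDsucc, if_neg hs, if_neg hk]
            have hpa : HasFDerivAt (fun w => a (w, u j))
                (fderiv ℝ (fun w => a (w, u j)) (z μ j))
                (z (Function.update μ κ₀ (μ κ₀)) j) := by
              rw [hfix]
              exact ((hadiff.comp (differentiable_id.prodMk
                (differentiable_const _))).differentiableAt).hasFDerivAt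
            have hpb : HasFDerivAt (β j) (fderiv ℝ (β j) (z μ j))
                (z (Function.update μ κ₀ (μ κ₀)) j) := by
              rw [hfix]; exact ((hβdiff j) (z μ j)).hasFDerivAt
            have huj : u j = μ ⟨j, hjK⟩ := hu ⟨j, hjK⟩
            rw [huj] at hpa ⊢
            exact (ihf.add ((hpa.comp (μ κ₀) ihf).const_smul Δt)).add
              (hpb.comp (μ κ₀) ihf)
    -- derivatives of the summands of the cost
    set filt : Finset (Fin K) := Finset.univ.filter (fun κ : Fin K => (κ : ℕ) + 1 ∉ S)
      with hfiltdef
    set P : Fin K → (EuclideanSpace ℝ (Fin L) →L[ℝ] ℝ) := fun κ =>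
      if κ = κ₀ then fderiv ℝ (fun m => g (z μ κ₀, m)) (μ κ₀)
      else (fderiv ℝ (fun w => g (w, μ κ)) (z μ κ)).comp (D κ) with hPdef
    have hPd : ∀ κ : Fin K, HasFDerivAt
        (fun m => g (z (Function.update μ κ₀ m) κ, Function.update μ κ₀ m κ))
        (P κ) (μ κ₀) := by
      intro κ
      by_cases hκ : κ = κ₀
      · subst hκ
        have he : (fun m => g (z (Function.update μ κ m) κ, Function.update μ κ m κ))
            = fun m => g (z μ κ, m) := by
          funext m; rw [hA m κ le_rfl, Function.update_self]
        rw [he, hPdef]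
        simp only [if_pos rfl]
        exact ((hgdiff.comp ((differentiable_const _).prodMk
          differentiable_id)).differentiableAt).hasFDerivAt
      · have he : (fun m => g (z (Function.update μ κ₀ m) κ, Function.update μ κ₀ m κ))
            = fun m => g (z (Function.update μ κ₀ m) κ, μ κ) := by
          funext m; rw [Function.update_of_ne hκ]
        rw [he, hPdef]
        simp only [if_neg hκ]
        have hpg : HasFDerivAt (fun w => g (w, μ κ))
            (fderiv ℝ (fun w => g (w, μ κ)) (z μ κ))
            (z (Function.update μ κ₀ (μ κ₀)) κ) := by
          rw [hfix]
          exact ((hgdiff.comp (differentiable_id.prodMk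
            (differentiable_const _))).differentiableAt).hasFDerivAt
        exact hpg.comp (μ κ₀) (hDf κ κ.isLt.le)
    have hJf : HasFDerivAt (fun m => J (Function.update μ κ₀ m))
        (Δt • ∑ κ ∈ filt, P κ) (μ κ₀) := by
      have he : (fun m => J (Function.update μ κ₀ m)) = fun m => Δt *
          ∑ κ ∈ filt, g (z (Function.update μ κ₀ m) κ, Function.update μ κ₀ m κ) := by
        funext m; rw [hJ]
      rw [he]
      exact (HasFDerivAt.fun_sum fun κ _ => hPd κ).const_mul Δt
    -- the key pointwise identity for the total derivative
    have key : ∀ v : EuclideanSpace ℝ (Fin L), (Δt • ∑ κ ∈ filt, P κ) v =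
        ⟪(if (κ₀ : ℕ) + 1 ∈ S then 0
          else Δt • gradient (fun m => g (z μ κ₀, m)) (μ κ₀)
            - Δt • (fderiv ℝ (fun m => a (z μ κ₀, m)) (μ κ₀)).adjoint
                (r ((κ₀ : ℕ) + 1))), v⟫ := by
      intro v
      set tval : Fin K → ℝ := fun κ =>
        ⟪gradient (fun w => g (w, μ κ)) (z μ κ), D (κ : ℕ) v⟫ with htvaldef
      -- telescoping
      have tele : ∑ κ : Fin K,
          (⟪r ((κ : ℕ) + 1), D ((κ : ℕ) + 1) v⟫ - ⟪r (κ : ℕ), D (κ : ℕ) v⟫) = 0 := by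
        rw [Fin.sum_univ_eq_sum_range (fun j => ⟪r (j + 1), D (j + 1) v⟫ - ⟪r j, D j v⟫) K]
        rw [Finset.sum_range_sub (f := fun j => ⟪r j, D j v⟫)]
        rw [hrK, hDzero]
        simp
      have step : ∀ κ : Fin K,
          ⟪r ((κ : ℕ) + 1), D ((κ : ℕ) + 1) v⟫ - ⟪r (κ : ℕ), D (κ : ℕ) v⟫ =
          (if κ = κ₀ then ⟪r ((κ₀ : ℕ) + 1), D ((κ₀ : ℕ) + 1) v⟫ else 0)
          + (if (κ : ℕ) + 1 ∉ S ∧ κ ≠ κ₀ then Δt * tval κ else 0) := by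
        intro κ
        by_cases hκ : κ = κ₀
        · subst hκ
          rw [if_pos rfl, if_neg (by simp), hD0 (κ : ℕ) le_rfl]
          simp
        · rw [if_neg hκ, zero_add]
          by_cases hs : (κ : ℕ) + 1 ∈ S
          · rw [if_neg (by tauto)]
            have hDs : D ((κ : ℕ) + 1) = (fderiv ℝ c (z μ κ)).comp (D (κ : ℕ)) := by
              rw [hDsucc, if_pos hs]
            rw [hDs, hrjump κ hs]
            simp [ContinuousLinearMap.adjoint_inner_left]
          · rw [if_pos ⟨hs, hκ⟩]
            have hk : (κ : ℕ) ≠ (κ₀ : ℕ) := fun h => hκ (Fin.ext h)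
            have hDs : D ((κ : ℕ) + 1) = D (κ : ℕ)
                + Δt • ((fderiv ℝ (fun w => a (w, μ κ)) (z μ κ)).comp (D (κ : ℕ)))
                + (fderiv ℝ (β (κ : ℕ)) (z μ κ)).comp (D (κ : ℕ)) := by
              rw [hDsucc, if_neg hs, if_neg hk, hu κ]
            rw [hDs, hreuler κ hs, htvaldef]
            simp only [ContinuousLinearMap.add_apply, ContinuousLinearMap.coe_smul',
              Pi.smul_apply, ContinuousLinearMap.comp_apply, inner_add_left,
              inner_add_right, inner_sub_left, real_inner_smul_left,
              real_inner_smul_right, ContinuousLinearMap.adjoint_inner_left,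
              smul_eq_mul]
            ring
      have hsum0 : ⟪r ((κ₀ : ℕ) + 1), D ((κ₀ : ℕ) + 1) v⟫
          + Δt * ∑ κ ∈ filt, tval κ = 0 := by
        have h1 : ∑ κ : Fin K, (if κ = κ₀ then
            ⟪r ((κ₀ : ℕ) + 1), D ((κ₀ : ℕ) + 1) v⟫ else 0)
            = ⟪r ((κ₀ : ℕ) + 1), D ((κ₀ : ℕ) + 1) v⟫ := by
          rw [Finset.sum_ite_eq' Finset.univ κ₀
            (fun _ => ⟪r ((κ₀ : ℕ) + 1), D ((κ₀ : ℕ) + 1) v⟫)]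
          simp
        have h2 : ∑ κ : Fin K, (if (κ : ℕ) + 1 ∉ S ∧ κ ≠ κ₀ then Δt * tval κ else 0)
            = Δt * ∑ κ ∈ filt, tval κ := by
          rw [Finset.mul_sum, hfiltdef, Finset.sum_filter]
          refine Finset.sum_congr rfl fun κ _ => ?_
          by_cases hκ : κ = κ₀
          · subst hκ
            rw [if_neg (by tauto)]
            have : tval κ = 0 := by
              rw [htvaldef]; simp [hD0 (κ : ℕ) le_rfl]
            simp [this]
          · by_cases hs : (κ : ℕ) + 1 ∉ S
            · rw [if_pos ⟨hs, hκ⟩, if_pos hs]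
            · rw [if_neg (by tauto), if_neg hs]
        calc ⟪r ((κ₀ : ℕ) + 1), D ((κ₀ : ℕ) + 1) v⟫ + Δt * ∑ κ ∈ filt, tval κ
            = ∑ κ : Fin K, ((if κ = κ₀ then
                ⟪r ((κ₀ : ℕ) + 1), D ((κ₀ : ℕ) + 1) v⟫ else 0)
              + (if (κ : ℕ) + 1 ∉ S ∧ κ ≠ κ₀ then Δt * tval κ else 0)) := by
              rw [Finset.sum_add_distrib, h1, h2]
          _ = ∑ κ : Fin K,
              (⟪r ((κ : ℕ) + 1), D ((κ : ℕ) + 1) v⟫ - ⟪r (κ : ℕ), D (κ : ℕ) v⟫) :=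
              (Finset.sum_congr rfl fun κ _ => (step κ).symm)
          _ = 0 := tele
      -- evaluate the sum of the partial derivatives
      have hPv : ∀ κ ∈ filt, P κ v = tval κ
          + (if κ = κ₀ then fderiv ℝ (fun m => g (z μ κ₀, m)) (μ κ₀) v else 0) := by
        intro κ _
        by_cases hκ : κ = κ₀
        · subst hκ
          have htv : tval κ = 0 := by
            simp only [htvaldef]; simp [hD0 (κ : ℕ) le_rfl]
          rw [htv, zero_add]
          simp [hPdef]
        · rw [hPdef]
          simp only [if_neg hκ, add_zero]
          simp only [htvaldef]
          rw [inner_gradient_eq]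
          simp [ContinuousLinearMap.comp_apply]
      have hPsum : (∑ κ ∈ filt, P κ) v = (∑ κ ∈ filt, tval κ)
          + (if κ₀ ∈ filt then fderiv ℝ (fun m => g (z μ κ₀, m)) (μ κ₀) v else 0) := by
        rw [ContinuousLinearMap.sum_apply, Finset.sum_congr rfl hPv,
          Finset.sum_add_distrib, Finset.sum_ite_eq' filt κ₀
            (fun _ => fderiv ℝ (fun m => g (z μ κ₀, m)) (μ κ₀) v)]
      by_cases hs₀ : (κ₀ : ℕ) + 1 ∈ S
      · have hnf : κ₀ ∉ filt := by rw [hfiltdef]; simp [hs₀]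
        have hD1 : D ((κ₀ : ℕ) + 1) = 0 := by
          rw [hDsucc, if_pos hs₀, hD0 (κ₀ : ℕ) le_rfl]; simp
        have hA0 : Δt * ∑ κ ∈ filt, tval κ = 0 := by
          have h := hsum0; rw [hD1] at h; simpa using h
        rw [if_pos hs₀, inner_zero_left, ContinuousLinearMap.smul_apply, hPsum,
          if_neg hnf, add_zero, smul_eq_mul]
        exact hA0
      · have hmf : κ₀ ∈ filt := by rw [hfiltdef]; simp [hs₀]
        have hD1 : D ((κ₀ : ℕ) + 1)
            = Δt • fderiv ℝ (fun m => a (z μ κ₀, m)) (μ κ₀) := by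
          rw [hDsucc, if_neg hs₀, if_pos rfl, hu κ₀]
        have hXv : ⟪r ((κ₀ : ℕ) + 1), D ((κ₀ : ℕ) + 1) v⟫
            = Δt * ⟪(fderiv ℝ (fun m => a (z μ κ₀, m)) (μ κ₀)).adjoint
                (r ((κ₀ : ℕ) + 1)), v⟫ := by
          rw [hD1, ContinuousLinearMap.smul_apply, real_inner_smul_right,
            ContinuousLinearMap.adjoint_inner_left]
        have hA' : Δt * ∑ κ ∈ filt, tval κ
            = -(Δt * ⟪(fderiv ℝ (fun m => a (z μ κ₀, m)) (μ κ₀)).adjoint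
                (r ((κ₀ : ℕ) + 1)), v⟫) := by
          have h := hsum0; rw [hXv] at h; linarith
        rw [if_neg hs₀, ContinuousLinearMap.smul_apply, hPsum, if_pos hmf,
          inner_sub_left, real_inner_smul_left, real_inner_smul_left,
          inner_gradient_eq, smul_eq_mul, mul_add, hA']
        ring
    -- conclude
    rw [hasGradientAt_iff_hasFDerivAt]
    have hTd : (InnerProductSpace.toDual ℝ (EuclideanSpace ℝ (Fin L)))
        (if (κ₀ : ℕ) + 1 ∈ S then 0
         else Δt • gradient (fun m => g (z μ κ₀, m)) (μ κ₀)
            - Δt • (fderiv ℝ (fun m => a (z μ κ₀, m)) (μ κ₀)).adjoint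
                (r ((κ₀ : ℕ) + 1)))
        = Δt • ∑ κ ∈ filt, P κ := by
      refine ContinuousLinearMap.ext fun v => ?_
      rw [InnerProductSpace.toDual_apply_apply]
      exact (key v).symm
    rw [hTd]
    exact hJf
  intro κ
  refine ⟨fun hs' => ?_, fun hs' => ?_⟩
  · have h := (main κ).gradient
    rwa [if_neg hs'] at h
  · have h := (main κ).gradient
    rwa [if_pos hs'] at h
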